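/- Let α > 0 and K > 0. For every y ∈ ℝ with |y| ≤ K one has ((e^{−αK} + αK − 1)/(αK²))·y² ≤ g_α(y) ≤ ((e^{αK} − αK − 1)/(αK²))·y², where both constants are strictly positive. -/

import Mathlib

/-- `g α y = (exp(α y) − α y − 1)/α`. -/
noncomputable def g (α y : ℝ) : ℝ := (Real.exp (α * y) - α * y - 1) / α

lemma contInt (x : ℝ) :
    IntervalIntegrable (fun t : ℝ => (1 - t) * Real.exp (t * x)) MeasureTheory.volume 0 1 := by
  apply Continuous.intervalIntegrable
  continuity

lemma intRep (x : ℝ) (hx : x ≠ 0) :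
    ∫ t in (0:ℝ)..1, (1 - t) * Real.exp (t * x) = (Real.exp x - x - 1) / x ^ 2 := by
  have h : ∀ t ∈ Set.uIcc (0:ℝ) 1,
      HasDerivAt (fun t => (1 - t) * Real.exp (t * x) / x + Real.exp (t * x) / x ^ 2)
        ((1 - t) * Real.exp (t * x)) t := by
    intro t _
    have h1 : HasDerivAt (fun t : ℝ => t * x) x t := by
      simpa using (hasDerivAt_id t).mul_const x
    have h2 : HasDerivAt (fun t : ℝ => Real.exp (t * x)) (Real.exp (t * x) * x) t :=
      h1.exp
    have h3 : HasDerivAt (fun t : ℝ => (1 - t) * Real.exp (t * x))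
        ((-1) * Real.exp (t * x) + (1 - t) * (Real.exp (t * x) * x)) t := by
      exact (((hasDerivAt_id t).const_sub 1)).mul h2
    have h4 := (h3.div_const x).add (h2.div_const (x ^ 2))
    refine h4.congr_deriv ?_
    field_simp
    ring
  have := intervalIntegral.integral_eq_sub_of_hasDerivAt h (contInt x)
  rw [this]
  field_simp
  simp only [mul_zero, Real.exp_zero]
  ring

lemma intMono {x y : ℝ} (h : x ≤ y) :
    (∫ t in (0:ℝ)..1, (1 - t) * Real.exp (t * x)) ≤
    ∫ t in (0:ℝ)..1, (1 - t) * Real.exp (t * y) := by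
  apply intervalIntegral.integral_mono_on (by norm_num) (contInt x) (contInt y)
  intro t ht
  rcases Set.mem_Icc.mp ht with ⟨ht0, ht1⟩
  have : Real.exp (t * x) ≤ Real.exp (t * y) :=
    Real.exp_le_exp.mpr (mul_le_mul_of_nonneg_left h ht0)
  nlinarith [Real.exp_pos (t * x)]

lemma key (c : ℝ) (hc : 0 < c) (x : ℝ) (hx : |x| ≤ c) :
    (Real.exp (-c) + c - 1) / c ^ 2 * x ^ 2 ≤ Real.exp x - x - 1 ∧
    Real.exp x - x - 1 ≤ (Real.exp c - c - 1) / c ^ 2 * x ^ 2 := by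
  rcases eq_or_ne x 0 with rfl | hx0
  · simp
  · have hxc : -c ≤ x := (abs_le.mp hx).1
    have hxc' : x ≤ c := (abs_le.mp hx).2
    have hl := intMono hxc
    have hr := intMono hxc'
    rw [intRep x hx0, intRep c hc.ne', intRep (-c) (by linarith : (-c:ℝ) ≠ 0)] at *
    have hx2 : (0:ℝ) < x ^ 2 := by positivity
    have hc2 : (0:ℝ) < c ^ 2 := by positivity
    have e1 : (Real.exp (-c) - (-c) - 1) / (-c) ^ 2 = (Real.exp (-c) + c - 1) / c ^ 2 := by
      ring_nf
    rw [e1] at hl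
    constructor
    · rw [div_le_div_iff₀ hc2 hx2] at hl
      rw [div_mul_eq_mul_div, div_le_iff₀ hc2]
      linarith
    · rw [div_le_div_iff₀ hx2 hc2] at hr
      rw [div_mul_eq_mul_div, le_div_iff₀ hc2]
      linarith

theorem stmt0 (α K : ℝ) (hα : 0 < α) (hK : 0 < K) (y : ℝ) (hy : |y| ≤ K) :
    0 < (Real.exp (-(α * K)) + α * K - 1) / (α * K ^ 2) ∧
    0 < (Real.exp (α * K) - α * K - 1) / (α * K ^ 2) ∧
    (Real.exp (-(α * K)) + α * K - 1) / (α * K ^ 2) * y ^ 2 ≤ g α y ∧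
    g α y ≤ (Real.exp (α * K) - α * K - 1) / (α * K ^ 2) * y ^ 2 := by
  have hc : 0 < α * K := mul_pos hα hK
  have hne : α * K ≠ 0 := hc.ne'
  have hp1 : 0 < Real.exp (-(α * K)) + α * K - 1 := by
    have := Real.add_one_lt_exp (by linarith : -(α * K) ≠ 0)
    linarith
  have hp2 : 0 < Real.exp (α * K) - α * K - 1 := by
    have := Real.add_one_lt_exp hne
    linarith
  have hden : 0 < α * K ^ 2 := by positivity
  refine ⟨div_pos hp1 hden, div_pos hp2 hden, ?_, ?_⟩
  · have hxy : |α * y| ≤ α * K := by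
      rw [abs_mul, abs_of_pos hα]
      exact mul_le_mul_of_nonneg_left hy hα.le
    have h := (key (α * K) hc (α * y) hxy).1
    unfold g
    rw [div_mul_eq_mul_div, div_le_div_iff₀ hden hα]
    rw [div_mul_eq_mul_div, div_le_iff₀ (by positivity : (0:ℝ) < (α*K)^2)] at h
    nlinarith [h, hα]
  · have hxy : |α * y| ≤ α * K := by
      rw [abs_mul, abs_of_pos hα]
      exact mul_le_mul_of_nonneg_left hy hα.le
    have h := (key (α * K) hc (α * y) hxy).2
    unfold g
    rw [div_mul_eq_mul_div, div_le_div_iff₀ hα hden]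
    rw [div_mul_eq_mul_div, le_div_iff₀ (by positivity : (0:ℝ) < (α*K)^2)] at h
    nlinarith [h, hα]
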